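/- arXiv:1506.04197 — 3 statements merged into one kernel-verified Lean document; each statement's English description precedes it below -/
import Mathlib

section
/- For all A, B ∈ 𝔄, the reflection respects the twisted product: Θ(A ∘ B) = Θ(A) ∘ Θ(B). -/
open ComplexOrder

noncomputable section

/-- The setting of the paper: a finite set `Λ` with a fixed-point free involution `ϑ`
exchanging `Λp` and its complement, the Clifford algebra (algebra of Majoranas) `carrier`
with self-adjoint generators `c i`, the global gauge automorphism `gauge`, the antilinear
reflection `*`-automorphism `Θ`, a square root `ζ` of `-1`, the twisted product `twist`,
a choice `P` of orderings of the subsets of `Λp` (giving the bases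
`{C J : J ∈ P}` of `𝔄₊` and `{Θ(C J) ∘ C J' : J, J' ∈ P}` of `𝔄`),
and the tracial state `Tr` picking out the coefficient of `1` in the basis expansion. -/
structure MajoranaSetting where
  Λ : Type
  [fintypeΛ : Fintype Λ]
  [deceqΛ : DecidableEq Λ]
  ϑ : Λ → Λ
  ϑ_invol : Function.Involutive ϑ
  ϑ_fixfree : ∀ i, ϑ i ≠ i
  Λp : Finset Λ
  ϑ_exch : ∀ i, i ∈ Λp ↔ ϑ i ∉ Λp
  carrier : Type
  [nring : NormedRing carrier]
  [nalg : NormedAlgebra ℂ carrier]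
  [cmpl : CompleteSpace carrier]
  [starring : StarRing carrier]
  [starmod : StarModule ℂ carrier]
  c : Λ → carrier
  c_star : ∀ i, star (c i) = c i
  clifford : ∀ i j, c i * c j + c j * c i = if i = j then (2 : carrier) else 0
  gauge : carrier ≃ₐ[ℂ] carrier
  gauge_c : ∀ i, gauge (c i) = - c i
  Θ : carrier → carrier
  Θ_add : ∀ x y, Θ (x + y) = Θ x + Θ y
  Θ_smul : ∀ (z : ℂ) (x), Θ (z • x) = (starRingEnd ℂ z) • Θ x
  Θ_mul : ∀ x y, Θ (x * y) = Θ x * Θ y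
  Θ_star : ∀ x, Θ (star x) = star (Θ x)
  Θ_invol : ∀ x, Θ (Θ x) = x
  Θ_c : ∀ i, Θ (c i) = c (ϑ i)
  ζ : ℂ
  ζ_sq : ζ ^ 2 = -1
  twist : carrier → carrier → carrier
  twist_add_left : ∀ x x' y, twist (x + x') y = twist x y + twist x' y
  twist_add_right : ∀ x y y', twist x (y + y') = twist x y + twist x y'
  twist_smul_left : ∀ (z : ℂ) (x y), twist (z • x) y = z • twist x y
  twist_smul_right : ∀ (z : ℂ) (x y), twist x (z • y) = z • twist x y
  twist_spec : ∀ (Am Ap Bm Bp : carrier) (a b a' b' : ℕ),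
    a ≤ 1 → b ≤ 1 → a' ≤ 1 → b' ≤ 1 →
    Am ∈ Algebra.adjoin ℂ (c '' {i | i ∉ Λp}) →
    Ap ∈ Algebra.adjoin ℂ (c '' {i | i ∈ Λp}) →
    Bm ∈ Algebra.adjoin ℂ (c '' {i | i ∉ Λp}) →
    Bp ∈ Algebra.adjoin ℂ (c '' {i | i ∈ Λp}) →
    gauge Am = ((-1 : ℂ) ^ a) • Am →
    gauge Ap = ((-1 : ℂ) ^ b) • Ap →
    gauge Bm = ((-1 : ℂ) ^ a') • Bm →
    gauge Bp = ((-1 : ℂ) ^ b') • Bp →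
    twist (Am * Ap) (Bm * Bp)
      = ζ ^ ((a * b' : ℤ) - (b * a' : ℤ)) • (Am * Ap * (Bm * Bp))
  P : Finset (List Λ)
  P_nodup : ∀ J ∈ P, J.Nodup
  P_sub : ∀ J ∈ P, ∀ i ∈ J, i ∈ Λp
  P_unique : ∀ s : Finset Λ, s ⊆ Λp → ∃! J, J ∈ P ∧ J.toFinset = s
  Tr : carrier →ₗ[ℂ] ℂ
  Tr_basis : ∀ J ∈ P, ∀ J' ∈ P,
    Tr (twist (Θ ((J.map c).prod)) ((J'.map c).prod))
      = if J = [] ∧ J' = [] then 1 else 0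
  basis_indep : LinearIndependent ℂ
    (fun p : {J // J ∈ P} × {J // J ∈ P} =>
      twist (Θ ((p.1.1.map c).prod)) ((p.2.1.map c).prod))
  basis_span : ∀ x : carrier, x ∈ Submodule.span ℂ
    (Set.range fun p : {J // J ∈ P} × {J // J ∈ P} =>
      twist (Θ ((p.1.1.map c).prod)) ((p.2.1.map c).prod))
  plus_span : ∀ x ∈ Algebra.adjoin ℂ (c '' {i | i ∈ Λp}),
    x ∈ Submodule.span ℂ (Set.range fun J : {J // J ∈ P} => ((J.1.map c).prod))

attribute [instance] MajoranaSetting.fintypeΛ MajoranaSetting.deceqΛ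
  MajoranaSetting.nring MajoranaSetting.nalg MajoranaSetting.cmpl
  MajoranaSetting.starring MajoranaSetting.starmod

namespace MajoranaSetting

variable (S : MajoranaSetting)

/-- The subalgebra `𝔄₊` generated by the Majoranas on the `+` side. -/
def Aplus : Subalgebra ℂ S.carrier := Algebra.adjoin ℂ (S.c '' {i | i ∈ S.Λp})

/-- The subalgebra `𝔄₋` generated by the Majoranas on the `-` side. -/
def Aminus : Subalgebra ℂ S.carrier := Algebra.adjoin ℂ (S.c '' {i | i ∉ S.Λp})

/-- The monomial `C_𝔍 = c_{i₁} ⋯ c_{i_k}`. -/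
def C (J : List S.Λ) : S.carrier := (J.map S.c).prod

/-- `q_𝔍 = (-1)^{k(k-1)/2}`. -/
def q (J : List S.Λ) : ℂ := (-1 : ℂ) ^ (J.length * (J.length - 1) / 2)

/-- `s_𝔍 = ζ^{k(k-1)/2}`. -/
def sgn (J : List S.Λ) : ℂ := S.ζ ^ (J.length * (J.length - 1) / 2)

/-- The exponential `e^x` in the (finite-dimensional) algebra `𝔄`. -/
def expm (x : S.carrier) : S.carrier := NormedSpace.exp x

/-- The Hamiltonian `H = -∑_{𝔍,𝔍' ∈ 𝒫₊} J_{𝔍𝔍'} Θ(C_𝔍) ∘ C_𝔍'`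
determined by coupling constants `Jc`. -/
def Ham (Jc : List S.Λ → List S.Λ → ℂ) : S.carrier :=
  - ∑ J ∈ S.P, ∑ J' ∈ S.P, Jc J J' • S.twist (S.Θ (S.C J)) (S.C J')

/-- The index type of the basis `{C J : J ∈ 𝒫₊}`. -/
abbrev PIdx := {J : List S.Λ // J ∈ S.P}

/-- The index type `𝒫₊ - {∅}` of couplings across the reflection plane. -/
abbrev PIdx0 := {p : S.PIdx // p.1 ≠ []}

/-- The full matrix of coupling constants. -/
def Jmat (Jc : List S.Λ → List S.Λ → ℂ) : Matrix S.PIdx S.PIdx ℂ :=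
  Matrix.of fun p q => Jc p.1 q.1

/-- The matrix `J⁰` of coupling constants across the reflection plane. -/
def Jmat0 (Jc : List S.Λ → List S.Λ → ℂ) : Matrix S.PIdx0 S.PIdx0 ℂ :=
  Matrix.of fun p q => Jc p.1.1 q.1.1

end MajoranaSetting

section Helpers
variable (S : MajoranaSetting)

lemma zeta_ne_zero : S.ζ ≠ 0 := by
  intro h
  have := S.ζ_sq
  rw [h] at this
  norm_num at this

lemma conj_zeta : (starRingEnd ℂ) S.ζ = -S.ζ := by
  have h : (S.ζ - Complex.I) * (S.ζ + Complex.I) = 0 := by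
    have h2 := S.ζ_sq
    have : (S.ζ - Complex.I) * (S.ζ + Complex.I) = S.ζ ^ 2 - Complex.I ^ 2 := by ring
    rw [this, h2, Complex.I_sq]; ring
  rcases mul_eq_zero.mp h with h1 | h1
  · rw [sub_eq_zero.mp h1, Complex.conj_I]
  · rw [eq_neg_of_add_eq_zero_left h1]
    simp [Complex.conj_I]

lemma inv_zeta : S.ζ⁻¹ = -S.ζ := by
  apply inv_eq_of_mul_eq_one_right
  have : S.ζ * -S.ζ = -(S.ζ ^ 2) := by ring
  rw [this, S.ζ_sq]; ring

lemma conj_zeta_zpow (m : ℤ) : (starRingEnd ℂ) (S.ζ ^ m) = S.ζ ^ (-m) := by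
  rw [map_zpow₀, conj_zeta, ← inv_zeta, inv_zpow, ← zpow_neg]

lemma Theta_one : S.Θ 1 = 1 := by
  have h : ∀ x, S.Θ x = S.Θ x * S.Θ 1 := fun x => by
    conv_lhs => rw [show x = x * 1 by rw [mul_one]]
    rw [S.Θ_mul]
  have := h (S.Θ 1)
  rw [S.Θ_invol, one_mul] at this
  exact this.symm

lemma Theta_C (J : List S.Λ) : S.Θ (S.C J) = S.C (J.map S.ϑ) := by
  induction J with
  | nil => simpa [MajoranaSetting.C] using Theta_one S
  | cons i J ih =>
    simp only [MajoranaSetting.C, List.map_cons, List.prod_cons] at *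
    rw [S.Θ_mul, S.Θ_c, ih]

lemma C_mem (J : List S.Λ) (s : Set S.Λ) (h : ∀ i ∈ J, i ∈ s) :
    S.C J ∈ Algebra.adjoin ℂ (S.c '' s) := by
  induction J with
  | nil => simpa [MajoranaSetting.C] using (Algebra.adjoin ℂ (S.c '' s)).one_mem
  | cons i J ih =>
    simp only [MajoranaSetting.C, List.map_cons, List.prod_cons]
    exact mul_mem (Algebra.subset_adjoin ⟨i, h i (by simp), rfl⟩)
      (ih fun j hj => h j (by simp [hj]))

lemma gauge_C (J : List S.Λ) : S.gauge (S.C J) = ((-1 : ℂ) ^ J.length) • S.C J := by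
  induction J with
  | nil => simp [MajoranaSetting.C]
  | cons i J ih =>
    simp only [MajoranaSetting.C, List.map_cons, List.prod_cons, List.length_cons] at *
    rw [map_mul, S.gauge_c i, ih, neg_mul, mul_smul_comm, pow_succ, mul_smul,
      neg_one_smul, smul_neg]

lemma neg_one_pow_mod (n : ℕ) : ((-1 : ℂ)) ^ (n % 2) = (-1 : ℂ) ^ n := by
  conv_rhs => rw [← Nat.div_add_mod n 2, pow_add, pow_mul]
  norm_num

lemma c_anticomm {i j : S.Λ} (h : i ≠ j) : S.c i * S.c j = - (S.c j * S.c i) := by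
  have := S.clifford i j
  rw [if_neg h] at this
  exact eq_neg_of_add_eq_zero_left this


lemma C_nil : S.C ([] : List S.Λ) = 1 := by simp [MajoranaSetting.C]

lemma C_cons (i : S.Λ) (J : List S.Λ) : S.C (i :: J) = S.c i * S.C J := by
  simp [MajoranaSetting.C]

lemma c_comm_C (i : S.Λ) (K : List S.Λ) (h : ∀ j ∈ K, i ≠ j) :
    S.c i * S.C K = ((-1 : ℂ) ^ K.length) • (S.C K * S.c i) := by
  induction K with
  | nil => simp [C_nil]
  | cons j K ih =>
    rw [C_cons, List.length_cons, ← mul_assoc, c_anticomm S (h j (by simp)), neg_mul,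
      mul_assoc, ih (fun a ha => h a (by simp [ha])), mul_smul_comm, pow_succ, mul_smul,
      neg_one_smul, smul_neg, ← mul_assoc]

lemma C_comm_C (J K : List S.Λ) (h : ∀ i ∈ J, ∀ j ∈ K, i ≠ j) :
    S.C J * S.C K = ((-1 : ℂ) ^ (J.length * K.length)) • (S.C K * S.C J) := by
  induction J with
  | nil => simp [C_nil]
  | cons i J ih =>
    rw [C_cons, List.length_cons, mul_assoc, ih (fun a ha => h a (by simp [ha])),
      mul_smul_comm, ← mul_assoc, c_comm_C S i K (h i (by simp)), smul_mul_assoc,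
      smul_smul, ← pow_add, mul_assoc]
    congr 2
    ring

lemma ThetaC_mem_minus (J : List S.Λ) (hJ : ∀ i ∈ J, i ∈ S.Λp) :
    S.Θ (S.C J) ∈ Algebra.adjoin ℂ (S.c '' {i | i ∉ S.Λp}) := by
  rw [Theta_C]
  apply C_mem
  intro i hi
  rcases List.mem_map.mp hi with ⟨j, hj, rfl⟩
  exact (S.ϑ_exch j).mp (hJ j hj)

lemma gauge_ThetaC (J : List S.Λ) :
    S.gauge (S.Θ (S.C J)) = ((-1 : ℂ) ^ (J.length % 2)) • S.Θ (S.C J) := by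
  rw [Theta_C, gauge_C, List.length_map, neg_one_pow_mod]

lemma gauge_C' (J : List S.Λ) :
    S.gauge (S.C J) = ((-1 : ℂ) ^ (J.length % 2)) • S.C J := by
  rw [gauge_C, neg_one_pow_mod]

lemma twist_M (J₁ K₁ J₂ K₂ : List S.Λ)
    (hJ₁ : ∀ i ∈ J₁, i ∈ S.Λp) (hK₁ : ∀ i ∈ K₁, i ∈ S.Λp)
    (hJ₂ : ∀ i ∈ J₂, i ∈ S.Λp) (hK₂ : ∀ i ∈ K₂, i ∈ S.Λp) :
    S.twist (S.Θ (S.C J₁) * S.C K₁) (S.Θ (S.C J₂) * S.C K₂)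
      = S.ζ ^ (((J₁.length % 2 : ℕ) * (K₂.length % 2 : ℕ) : ℤ)
          - ((K₁.length % 2 : ℕ) * (J₂.length % 2 : ℕ) : ℤ)) •
        (S.Θ (S.C J₁) * S.C K₁ * (S.Θ (S.C J₂) * S.C K₂)) :=
  S.twist_spec _ _ _ _ (J₁.length % 2) (K₁.length % 2) (J₂.length % 2) (K₂.length % 2)
    (Nat.le_of_lt_succ (Nat.mod_lt _ (by norm_num)))
    (Nat.le_of_lt_succ (Nat.mod_lt _ (by norm_num)))
    (Nat.le_of_lt_succ (Nat.mod_lt _ (by norm_num)))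
    (Nat.le_of_lt_succ (Nat.mod_lt _ (by norm_num)))
    (ThetaC_mem_minus S J₁ hJ₁) (C_mem S K₁ _ hK₁)
    (ThetaC_mem_minus S J₂ hJ₂) (C_mem S K₂ _ hK₂)
    (gauge_ThetaC S J₁) (gauge_C' S K₁) (gauge_ThetaC S J₂) (gauge_C' S K₂)

lemma E_eq (J K : List S.Λ) (hJ : ∀ i ∈ J, i ∈ S.Λp) (hK : ∀ i ∈ K, i ∈ S.Λp) :
    S.twist (S.Θ (S.C J)) (S.C K)
      = S.ζ ^ (((J.length % 2 : ℕ) * (K.length % 2 : ℕ) : ℤ)) •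
        (S.Θ (S.C J) * S.C K) := by
  have h := twist_M S J [] [] K hJ (by simp) (by simp) hK
  rw [C_nil, Theta_one] at h
  simpa using h

lemma M_swap (J K : List S.Λ) (hJ : ∀ i ∈ J, i ∈ S.Λp) (hK : ∀ i ∈ K, i ∈ S.Λp) :
    S.C J * S.Θ (S.C K)
      = ((-1 : ℂ) ^ (J.length * K.length)) • (S.Θ (S.C K) * S.C J) := by
  rw [Theta_C S K]
  have hd : ∀ i ∈ J, ∀ j ∈ K.map S.ϑ, i ≠ j := by
    intro i hi j hj
    rcases List.mem_map.mp hj with ⟨k, hk, rfl⟩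
    intro he
    exact (S.ϑ_exch k).mp (hK k hk) (he ▸ hJ i hi)
  rw [C_comm_C S J (K.map S.ϑ) hd, List.length_map]

lemma key_basis (J₁ K₁ J₂ K₂ : List S.Λ)
    (hJ₁ : ∀ i ∈ J₁, i ∈ S.Λp) (hK₁ : ∀ i ∈ K₁, i ∈ S.Λp)
    (hJ₂ : ∀ i ∈ J₂, i ∈ S.Λp) (hK₂ : ∀ i ∈ K₂, i ∈ S.Λp) :
    S.Θ (S.twist (S.twist (S.Θ (S.C J₁)) (S.C K₁)) (S.twist (S.Θ (S.C J₂)) (S.C K₂)))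
      = S.twist (S.Θ (S.twist (S.Θ (S.C J₁)) (S.C K₁)))
          (S.Θ (S.twist (S.Θ (S.C J₂)) (S.C K₂))) := by
  have hz := zeta_ne_zero S
  have hneg : ∀ l : ℕ, ((-1 : ℂ)) ^ l = S.ζ ^ ((2 * l : ℤ)) := fun l => by
    rw [zpow_mul, show (S.ζ ^ (2 : ℤ)) = -1 by rw [zpow_two, ← sq, S.ζ_sq], zpow_natCast]
  rw [E_eq S J₁ K₁ hJ₁ hK₁, E_eq S J₂ K₂ hJ₂ hK₂]
  simp only [S.twist_smul_left, S.twist_smul_right, S.Θ_smul, conj_zeta_zpow,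
    twist_M S J₁ K₁ J₂ K₂ hJ₁ hK₁ hJ₂ hK₂, S.Θ_mul, S.Θ_invol]
  rw [M_swap S J₁ K₁ hJ₁ hK₁, M_swap S J₂ K₂ hJ₂ hK₂]
  simp only [smul_mul_assoc, mul_smul_comm, S.twist_smul_left, S.twist_smul_right,
    twist_M S K₁ J₁ K₂ J₂ hK₁ hJ₁ hK₂ hJ₂, smul_smul, hneg]
  congr 1
  simp only [← zpow_add₀ hz]
  congr 1
  ring

end Helpers

/-- the reflection respects the twisted product:
`Θ(A ∘ B) = Θ(A) ∘ Θ(B)` for all `A, B ∈ 𝔄`. -/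
theorem reflection_respects_twist (S : MajoranaSetting) (A B : S.carrier) :
    S.Θ (S.twist A B) = S.twist (S.Θ A) (S.Θ B) := by
  have Θ0 : S.Θ 0 = 0 := by
    have := S.Θ_smul 0 0
    simpa using this
  have tz_left : ∀ y, S.twist 0 y = 0 := fun y => by
    have := S.twist_smul_left 0 0 y
    simpa using this
  have tz_right : ∀ x, S.twist x 0 = 0 := fun x => by
    have := S.twist_smul_right 0 x 0
    simpa using this
  have main : ∀ x ∈ (Set.range fun p : {J // J ∈ S.P} × {J // J ∈ S.P} =>
        S.twist (S.Θ ((p.1.1.map S.c).prod)) ((p.2.1.map S.c).prod)),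
      ∀ y ∈ (Set.range fun p : {J // J ∈ S.P} × {J // J ∈ S.P} =>
        S.twist (S.Θ ((p.1.1.map S.c).prod)) ((p.2.1.map S.c).prod)),
      S.Θ (S.twist x y) = S.twist (S.Θ x) (S.Θ y) := by
    rintro x ⟨p, rfl⟩ y ⟨q, rfl⟩
    exact key_basis S p.1.1 p.2.1 q.1.1 q.2.1 (S.P_sub _ p.1.2) (S.P_sub _ p.2.2)
      (S.P_sub _ q.1.2) (S.P_sub _ q.2.2)
  have stepB : ∀ x ∈ (Set.range fun p : {J // J ∈ S.P} × {J // J ∈ S.P} =>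
        S.twist (S.Θ ((p.1.1.map S.c).prod)) ((p.2.1.map S.c).prod)),
      S.Θ (S.twist x B) = S.twist (S.Θ x) (S.Θ B) := by
    intro x hx
    induction S.basis_span B using Submodule.span_induction with
    | mem y hy => exact main x hx y hy
    | zero => rw [tz_right, Θ0, tz_right]
    | add y z hy hz ihy ihz =>
      rw [S.twist_add_right, S.Θ_add, ihy, ihz, S.Θ_add, S.twist_add_right]
    | smul a y hy ih =>
      rw [S.twist_smul_right, S.Θ_smul, ih, S.Θ_smul, S.twist_smul_right]
  induction S.basis_span A using Submodule.span_induction with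
  | mem x hx => exact stepB x hx
  | zero => rw [tz_left, Θ0, tz_left]
  | add x y hx hy ihx ihy =>
    rw [S.twist_add_left, S.Θ_add, ihx, ihy, S.Θ_add, S.twist_add_left]
  | smul a x hx ih =>
    rw [S.twist_smul_left, S.Θ_smul, ih, S.Θ_smul, S.twist_smul_left]
end
end

section
/- If A and B both lie in 𝔄₊, or both lie in 𝔄₋, then Θ(Θ(A) ∘ B) = Θ(B) ∘ A. In particular, Θ permutes the basis of 𝔄: Θ(Θ(C_𝔍) ∘ C_{𝔍'}) = Θ(C_{𝔍'}) ∘ C_𝔍 for all 𝔍, 𝔍' ∈ 𝒫₊. -/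
open ComplexOrder

noncomputable section

namespace MajoranaSetting

variable (S : MajoranaSetting)

lemma Θ_one : S.Θ 1 = 1 := by
  have h := S.Θ_mul (S.Θ 1) 1
  rw [mul_one, S.Θ_invol, one_mul] at h
  exact h.symm

lemma Θ_zero : S.Θ 0 = 0 := by
  have h : (0 : S.carrier) = (0 : ℂ) • (0 : S.carrier) := by simp
  rw [h, S.Θ_smul]; simp

lemma twist_zero_left (y : S.carrier) : S.twist 0 y = 0 := by
  have h : (0 : S.carrier) = (0 : ℂ) • (0 : S.carrier) := by simp
  rw [h, S.twist_smul_left]; simp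

lemma twist_zero_right (x : S.carrier) : S.twist x 0 = 0 := by
  have h : (0 : S.carrier) = (0 : ℂ) • (0 : S.carrier) := by simp
  rw [h, S.twist_smul_right]; simp

lemma C_nil : S.C [] = 1 := by simp [C]

lemma C_cons (i : S.Λ) (J : List S.Λ) : S.C (i :: J) = S.c i * S.C J := by
  simp [C]

lemma gauge_C (J : List S.Λ) :
    S.gauge (S.C J) = ((-1 : ℂ) ^ J.length) • S.C J := by
  induction J with
  | nil => simp [C_nil]
  | cons i J ih =>
    rw [C_cons, map_mul, S.gauge_c, ih, List.length_cons, pow_succ, neg_mul,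
      mul_smul_comm, mul_comm ((-1:ℂ) ^ J.length) (-1), mul_smul, neg_one_smul]

lemma Θ_C (J : List S.Λ) : S.Θ (S.C J) = S.C (J.map S.ϑ) := by
  induction J with
  | nil => simpa [C_nil] using S.Θ_one
  | cons i J ih => rw [C_cons, S.Θ_mul, S.Θ_c, ih, List.map_cons, C_cons]

lemma C_mem (s : Set S.Λ) (J : List S.Λ) (h : ∀ i ∈ J, i ∈ s) :
    S.C J ∈ Algebra.adjoin ℂ (S.c '' s) := by
  induction J with
  | nil => rw [C_nil]; exact one_mem _
  | cons i J ih =>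
    rw [C_cons]
    exact mul_mem (Algebra.subset_adjoin ⟨i, h i (by simp), rfl⟩)
      (ih fun j hj => h j (by simp [hj]))

lemma c_anticomm {i j : S.Λ} (h : i ≠ j) : S.c i * S.c j = -(S.c j * S.c i) := by
  have hc := S.clifford i j
  rw [if_neg h] at hc
  exact eq_neg_of_add_eq_zero_left hc

lemma c_prod_comm (i : S.Λ) (J : List S.Λ) (h : ∀ j ∈ J, j ≠ i) :
    S.c i * S.C J = ((-1 : ℂ) ^ J.length) • (S.C J * S.c i) := by
  induction J with
  | nil => simp [C_nil]
  | cons j J ih =>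
    have hj : i ≠ j := (h j (by simp)).symm
    rw [C_cons, ← mul_assoc, S.c_anticomm hj, neg_mul, mul_assoc,
      ih (fun k hk => h k (by simp [hk])), mul_smul_comm, List.length_cons,
      pow_succ, mul_comm ((-1:ℂ) ^ J.length) (-1), mul_smul, neg_one_smul,
      mul_assoc]

lemma prod_prod_comm (J M : List S.Λ) (h : ∀ i ∈ M, ∀ j ∈ J, j ≠ i) :
    S.C M * S.C J = ((-1 : ℂ) ^ (M.length * J.length)) • (S.C J * S.C M) := by
  induction M with
  | nil => simp [C_nil]
  | cons i M ih =>
    rw [C_cons, mul_assoc, ih (fun a ha => h a (by simp [ha])), mul_smul_comm,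
      ← mul_assoc, S.c_prod_comm i J (fun j hj => h i (by simp) j hj),
      smul_mul_assoc, smul_smul, mul_assoc, ← C_cons, List.length_cons,
      ← pow_add]
    ring_nf

lemma ζ_ne_zero : S.ζ ≠ 0 := by
  intro h
  have hs := S.ζ_sq
  rw [h] at hs
  norm_num at hs

lemma conj_ζ : (starRingEnd ℂ) S.ζ = -S.ζ := by
  have h : (S.ζ - Complex.I) * (S.ζ + Complex.I) = 0 := by
    linear_combination S.ζ_sq - Complex.I_sq
  rcases mul_eq_zero.mp h with h | h
  · have hz : S.ζ = Complex.I := by linear_combination h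
    rw [hz, Complex.conj_I]
  · have hz : S.ζ = -Complex.I := by linear_combination h
    rw [hz]; simp

lemma neg_one_pow_mod (n : ℕ) : ((-1 : ℂ)) ^ n = (-1) ^ (n % 2) := by
  conv_lhs => rw [← Nat.div_add_mod n 2]
  rw [pow_add, pow_mul, neg_one_sq, one_pow, one_mul]

lemma neg_one_pow_mul_mod (m n : ℕ) :
    ((-1 : ℂ)) ^ (m * n) = (-1) ^ ((m % 2) * (n % 2)) := by
  rw [pow_mul, neg_one_pow_mod, ← pow_mul, mul_comm, pow_mul,
    neg_one_pow_mod, ← pow_mul, mul_comm]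

lemma mem_plus (J : List S.Λ) (hJ : ∀ i ∈ J, i ∈ S.Λp) :
    S.C J ∈ Algebra.adjoin ℂ (S.c '' {i | i ∈ S.Λp}) :=
  S.C_mem _ J hJ

lemma mem_minus (J : List S.Λ) (hJ : ∀ i ∈ J, i ∈ S.Λp) :
    S.C (J.map S.ϑ) ∈ Algebra.adjoin ℂ (S.c '' {i | i ∉ S.Λp}) := by
  apply S.C_mem
  intro i hi
  simp only [List.mem_map] at hi
  obtain ⟨j, hj, rfl⟩ := hi
  exact (S.ϑ_exch j).mp (hJ j hj)

lemma gauge_one' : S.gauge 1 = ((-1 : ℂ) ^ (0 : ℕ)) • (1 : S.carrier) := by simp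

lemma gauge_C_mod (J : List S.Λ) :
    S.gauge (S.C J) = ((-1 : ℂ) ^ (J.length % 2)) • S.C J := by
  rw [gauge_C, neg_one_pow_mod]

lemma gauge_C_map_mod (J : List S.Λ) :
    S.gauge (S.C (J.map S.ϑ)) = ((-1 : ℂ) ^ (J.length % 2)) • S.C (J.map S.ϑ) := by
  rw [gauge_C, List.length_map, neg_one_pow_mod]

lemma disj_minus_plus (J J' : List S.Λ) (hJ : ∀ i ∈ J, i ∈ S.Λp)
    (hJ' : ∀ i ∈ J', i ∈ S.Λp) :
    ∀ i ∈ J'.map S.ϑ, ∀ j ∈ J, j ≠ i := by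
  intro i hi j hj
  simp only [List.mem_map] at hi
  obtain ⟨k, hk, rfl⟩ := hi
  intro he
  exact (S.ϑ_exch k).mp (hJ' k hk) (he ▸ hJ j hj)

lemma key_plus_mono (J J' : List S.Λ) (hJ : ∀ i ∈ J, i ∈ S.Λp)
    (hJ' : ∀ i ∈ J', i ∈ S.Λp) :
    S.Θ (S.twist (S.Θ (S.C J)) (S.C J')) = S.twist (S.Θ (S.C J')) (S.C J) := by
  have hb : J.length % 2 ≤ 1 := Nat.le_of_lt_succ (Nat.mod_lt _ (by norm_num))
  have hb' : J'.length % 2 ≤ 1 := Nat.le_of_lt_succ (Nat.mod_lt _ (by norm_num))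
  have h1 := S.twist_spec (S.C (J.map S.ϑ)) 1 1 (S.C J')
    (J.length % 2) 0 0 (J'.length % 2) hb (by norm_num) (by norm_num) hb'
    (S.mem_minus J hJ) (one_mem _) (one_mem _) (S.mem_plus J' hJ')
    (S.gauge_C_map_mod J) S.gauge_one' S.gauge_one' (S.gauge_C_mod J')
  have h2 := S.twist_spec (S.C (J'.map S.ϑ)) 1 1 (S.C J)
    (J'.length % 2) 0 0 (J.length % 2) hb' (by norm_num) (by norm_num) hb
    (S.mem_minus J' hJ') (one_mem _) (one_mem _) (S.mem_plus J hJ)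
    (S.gauge_C_map_mod J') S.gauge_one' S.gauge_one' (S.gauge_C_mod J)
  rw [mul_one, one_mul] at h1 h2
  have he1 : ((↑(J.length % 2) * ↑(J'.length % 2) : ℤ) - (↑(0:ℕ) * ↑(0:ℕ)))
      = ((J.length % 2) * (J'.length % 2) : ℕ) := by push_cast; ring
  have he2 : ((↑(J'.length % 2) * ↑(J.length % 2) : ℤ) - (↑(0:ℕ) * ↑(0:ℕ)))
      = ((J.length % 2) * (J'.length % 2) : ℕ) := by push_cast; ring
  rw [he1, zpow_natCast] at h1
  rw [he2, zpow_natCast] at h2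
  have hΘΘ : S.Θ (S.C (J.map S.ϑ)) = S.C J := by
    rw [← S.Θ_C, S.Θ_invol]
  have hcomm := S.prod_prod_comm J (J'.map S.ϑ) (S.disj_minus_plus J J' hJ hJ')
  rw [S.Θ_C J, S.Θ_C J', h1, h2, S.Θ_smul, S.Θ_mul, hΘΘ, S.Θ_C J', hcomm,
    List.length_map, smul_smul]
  congr 1
  rw [map_pow, S.conj_ζ, neg_pow, neg_one_pow_mul_mod J'.length J.length,
    Nat.mul_comm (J'.length % 2) (J.length % 2)]
  ring

lemma key_minus_mono (J J' : List S.Λ) (hJ : ∀ i ∈ J, i ∈ S.Λp)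
    (hJ' : ∀ i ∈ J', i ∈ S.Λp) :
    S.Θ (S.twist (S.C J) (S.Θ (S.C J'))) = S.twist (S.C J') (S.Θ (S.C J)) := by
  have hb : J.length % 2 ≤ 1 := Nat.le_of_lt_succ (Nat.mod_lt _ (by norm_num))
  have hb' : J'.length % 2 ≤ 1 := Nat.le_of_lt_succ (Nat.mod_lt _ (by norm_num))
  have h1 := S.twist_spec 1 (S.C J) (S.C (J'.map S.ϑ)) 1
    0 (J.length % 2) (J'.length % 2) 0 (by norm_num) hb hb' (by norm_num)
    (one_mem _) (S.mem_plus J hJ) (S.mem_minus J' hJ') (one_mem _)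
    S.gauge_one' (S.gauge_C_mod J) (S.gauge_C_map_mod J') S.gauge_one'
  have h2 := S.twist_spec 1 (S.C J') (S.C (J.map S.ϑ)) 1
    0 (J'.length % 2) (J.length % 2) 0 (by norm_num) hb' hb (by norm_num)
    (one_mem _) (S.mem_plus J' hJ') (S.mem_minus J hJ) (one_mem _)
    S.gauge_one' (S.gauge_C_mod J') (S.gauge_C_map_mod J) S.gauge_one'
  rw [mul_one, one_mul] at h1 h2
  have he1 : ((↑(0:ℕ) * ↑(0:ℕ) : ℤ) - (↑(J.length % 2) * ↑(J'.length % 2)))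
      = -(((J.length % 2) * (J'.length % 2) : ℕ) : ℤ) := by push_cast; ring
  have he2 : ((↑(0:ℕ) * ↑(0:ℕ) : ℤ) - (↑(J'.length % 2) * ↑(J.length % 2)))
      = -(((J.length % 2) * (J'.length % 2) : ℕ) : ℤ) := by push_cast; ring
  rw [he1] at h1
  rw [he2] at h2
  have hΘΘ : S.Θ (S.C (J'.map S.ϑ)) = S.C J' := by
    rw [← S.Θ_C, S.Θ_invol]
  have hcomm := S.prod_prod_comm (J.map S.ϑ) J'
    (fun i hi j hj => ((S.disj_minus_plus J' J hJ' hJ) j hj i hi).symm)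
  rw [S.Θ_C J', S.Θ_C J, h1, h2, S.Θ_smul, S.Θ_mul, hΘΘ, S.Θ_C J, hcomm,
    List.length_map, smul_smul]
  congr 1
  rw [map_zpow₀, S.conj_ζ, neg_eq_neg_one_mul S.ζ, mul_zpow,
    neg_one_pow_mul_mod J'.length J.length,
    Nat.mul_comm (J'.length % 2) (J.length % 2)]
  have hneg : ((-1 : ℂ)) ^ (-(((J.length % 2) * (J'.length % 2) : ℕ) : ℤ))
      = (-1 : ℂ) ^ ((J.length % 2) * (J'.length % 2)) := by
    rw [zpow_neg, zpow_natCast, ← inv_pow, inv_neg, inv_one]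
  rw [hneg]
  ring

lemma Θ_mem_minus (x : S.carrier) (hx : x ∈ S.Aminus) : S.Θ x ∈ S.Aplus := by
  induction hx using Algebra.adjoin_induction with
  | mem y hy =>
    obtain ⟨i, hi, rfl⟩ := hy
    rw [S.Θ_c]
    refine Algebra.subset_adjoin ⟨S.ϑ i, ?_, rfl⟩
    exact (S.ϑ_exch (S.ϑ i)).mpr (by rw [S.ϑ_invol i]; exact hi)
  | algebraMap r =>
    rw [Algebra.algebraMap_eq_smul_one, S.Θ_smul, S.Θ_one]
    exact Subalgebra.smul_mem _ (one_mem _) _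
  | add x y hx hy ihx ihy => rw [S.Θ_add]; exact add_mem ihx ihy
  | mul x y hx hy ihx ihy => rw [S.Θ_mul]; exact mul_mem ihx ihy

lemma key_plus (A B : S.carrier) (hA : A ∈ S.Aplus) (hB : B ∈ S.Aplus) :
    S.Θ (S.twist (S.Θ A) B) = S.twist (S.Θ B) A := by
  have hA' := S.plus_span A hA
  have hB' := S.plus_span B hB
  clear hA hB
  induction hA' using Submodule.span_induction with
  | mem x hx =>
    obtain ⟨⟨J, hJ⟩, rfl⟩ := hx
    induction hB' using Submodule.span_induction with
    | mem y hy =>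
      obtain ⟨⟨J', hJ'⟩, rfl⟩ := hy
      exact S.key_plus_mono J J' (S.P_sub J hJ) (S.P_sub J' hJ')
    | zero => rw [S.twist_zero_right, S.Θ_zero, S.twist_zero_left]
    | add u v hu hv ihu ihv =>
      rw [S.twist_add_right, S.Θ_add, ihu, ihv, S.Θ_add, S.twist_add_left]
    | smul z u hu ihu =>
      rw [S.twist_smul_right, S.Θ_smul, ihu, S.Θ_smul, S.twist_smul_left]
  | zero => rw [S.Θ_zero, S.twist_zero_left, S.Θ_zero, S.twist_zero_right]
  | add u v hu hv ihu ihv =>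
    rw [S.Θ_add, S.twist_add_left, S.Θ_add, ihu, ihv, S.twist_add_right]
  | smul z u hu ihu =>
    rw [S.Θ_smul, S.twist_smul_left, S.Θ_smul, Complex.conj_conj, ihu,
      S.twist_smul_right]

lemma key_minus_span (x y : S.carrier)
    (hx : x ∈ Submodule.span ℂ
      (Set.range fun J : {J // J ∈ S.P} => ((J.1.map S.c).prod)))
    (hy : y ∈ Submodule.span ℂ
      (Set.range fun J : {J // J ∈ S.P} => ((J.1.map S.c).prod))) :
    S.Θ (S.twist x (S.Θ y)) = S.twist y (S.Θ x) := by
  induction hx using Submodule.span_induction with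
  | mem u hu =>
    obtain ⟨⟨J, hJ⟩, rfl⟩ := hu
    induction hy using Submodule.span_induction with
    | mem v hv =>
      obtain ⟨⟨J', hJ'⟩, rfl⟩ := hv
      exact S.key_minus_mono J J' (S.P_sub J hJ) (S.P_sub J' hJ')
    | zero => rw [S.Θ_zero, S.twist_zero_right, S.Θ_zero, S.twist_zero_left]
    | add u v hu hv ihu ihv =>
      rw [S.Θ_add, S.twist_add_right, S.Θ_add, ihu, ihv, S.twist_add_left]
    | smul z u hu ihu =>
      rw [S.Θ_smul, S.twist_smul_right, S.Θ_smul, Complex.conj_conj, ihu,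
        S.twist_smul_left]
  | zero => rw [S.twist_zero_left, S.Θ_zero, S.twist_zero_right]
  | add u v hu hv ihu ihv =>
    rw [S.twist_add_left, S.Θ_add, ihu, ihv, S.Θ_add, S.twist_add_right]
  | smul z u hu ihu =>
    rw [S.twist_smul_left, S.Θ_smul, ihu, S.Θ_smul, S.twist_smul_right]

lemma key_minus (A B : S.carrier) (hA : A ∈ S.Aminus) (hB : B ∈ S.Aminus) :
    S.Θ (S.twist (S.Θ A) B) = S.twist (S.Θ B) A := by
  have h1 : S.Θ A ∈ S.Aplus := S.Θ_mem_minus A hA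
  have h2 : S.Θ B ∈ S.Aplus := S.Θ_mem_minus B hB
  have h := S.key_minus_span (S.Θ A) (S.Θ B) (S.plus_span _ h1) (S.plus_span _ h2)
  rwa [S.Θ_invol, S.Θ_invol] at h

end MajoranaSetting

/-- if `A, B` both lie in `𝔄₊`, or both lie in `𝔄₋`, then
`Θ(Θ(A) ∘ B) = Θ(B) ∘ A`; in particular `Θ` permutes the basis:
`Θ(Θ(C_𝔍) ∘ C_𝔍') = Θ(C_𝔍') ∘ C_𝔍` for `𝔍, 𝔍' ∈ 𝒫₊`. -/
theorem reflection_permutes_basis (S : MajoranaSetting) :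
    (∀ A B : S.carrier,
      (A ∈ S.Aplus ∧ B ∈ S.Aplus) ∨ (A ∈ S.Aminus ∧ B ∈ S.Aminus) →
      S.Θ (S.twist (S.Θ A) B) = S.twist (S.Θ B) A) ∧
    (∀ J ∈ S.P, ∀ J' ∈ S.P,
      S.Θ (S.twist (S.Θ (S.C J)) (S.C J')) = S.twist (S.Θ (S.C J')) (S.C J)) := by
  constructor
  · rintro A B (⟨hA, hB⟩ | ⟨hA, hB⟩)
    · exact S.key_plus A B hA hB
    · exact S.key_minus A B hA hB
  · intro J hJ J' hJ'
    exact S.key_plus _ _ (S.mem_plus J (S.P_sub J hJ)) (S.mem_plus J' (S.P_sub J' hJ'))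
end
end

section
/- Let ω(A) = Tr(A·R) be the linear functional with density matrix R ∈ 𝔄, where R = Σ_{𝔍,𝔍'∈𝒫₊} r_{𝔍𝔍'}·Θ(C_𝔍)∘C_{𝔍'}, and let ⟨A,B⟩ := ω(Θ(A)∘B). The following are equivalent: (a) ω is reflection invariant, i.e. ω(Θ(A)) = conj(ω(A)) for all A ∈ 𝔄; (b) Θ(R) = R; (c) the matrix (r_{𝔍𝔍'}) is hermitian, r_{𝔍'𝔍} = conj(r_{𝔍𝔍'}); (d) the sesquilinear form ⟨·,·⟩ is hermitian on 𝔄₊, i.e. ⟨A,B⟩ = conj(⟨B,A⟩) for all A, B ∈ 𝔄₊. -/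
open ComplexOrder

noncomputable section

namespace RefInv
open MajoranaSetting
variable (S : MajoranaSetting)

lemma c_sq (i : S.Λ) : S.c i * S.c i = 1 := by
  have h := S.clifford i i
  rw [if_pos rfl] at h
  have h2 : (2:ℂ) • (S.c i * S.c i) = (2:ℂ) • (1 : S.carrier) := by
    rw [two_smul, two_smul, h, one_add_one_eq_two]
  exact smul_right_injective S.carrier two_ne_zero h2

lemma c_anticomm {i j : S.Λ} (h : i ≠ j) : S.c i * S.c j = -(S.c j * S.c i) := by
  have hc := S.clifford i j
  rw [if_neg h] at hc
  exact eq_neg_of_add_eq_zero_left hc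

lemma Θ_one : S.Θ 1 = 1 := by
  have h : (1 : S.carrier) = 1 * S.Θ 1 := by
    conv_lhs => rw [← S.Θ_invol 1]
    conv_lhs => rw [show S.Θ 1 = S.Θ 1 * 1 from (mul_one _).symm]
    rw [S.Θ_mul, S.Θ_invol]
  rw [one_mul] at h
  exact h.symm

lemma Θ_zero : S.Θ 0 = 0 := by
  have := S.Θ_smul 0 0
  simpa using this

lemma C_nil : S.C [] = 1 := by simp [C]

lemma C_cons (i : S.Λ) (J : List S.Λ) : S.C (i :: J) = S.c i * S.C J := by simp [C]

lemma gauge_C (J : List S.Λ) : S.gauge (S.C J) = ((-1:ℂ)^J.length) • S.C J := by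
  induction J with
  | nil => simp [C_nil]
  | cons i T ih =>
      rw [C_cons, map_mul, ih, S.gauge_c, List.length_cons, pow_succ,
        neg_mul, mul_smul_comm, mul_neg_one, neg_smul]

lemma Θ_C (J : List S.Λ) : S.Θ (S.C J) = S.C (J.map S.ϑ) := by
  induction J with
  | nil => rw [C_nil, Θ_one]; simp [C]
  | cons i T ih => rw [C_cons, S.Θ_mul, ih, S.Θ_c, List.map_cons, C_cons]

end RefInv
namespace RefInv
variable (S : MajoranaSetting)

lemma np (n : ℕ) : ((-1:ℂ))^n = (-1)^(n % 2) := by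
  conv_lhs => rw [← Nat.div_add_mod n 2]
  rw [pow_add, pow_mul]
  norm_num

lemma c_swap (i : S.Λ) (M : List S.Λ) :
    S.c i * S.C M = ((-1:ℂ)^(M.length + M.count i)) • (S.C M * S.c i) := by
  induction M with
  | nil => simp [C_nil]
  | cons j T ih =>
      rw [C_cons, List.length_cons]
      by_cases hij : i = j
      · subst hij
        rw [List.count_cons_self]
        have key : (S.c i * S.C T) * S.c i = ((-1:ℂ)^(T.length + T.count i)) • S.C T := by
          rw [ih, smul_mul_assoc, mul_assoc, c_sq, mul_one]
        rw [← mul_assoc, c_sq, one_mul, key, smul_smul, ← pow_add]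
        have he : Even (T.length + 1 + (T.count i + 1) + (T.length + T.count i)) :=
          ⟨T.length + T.count i + 1, by ring⟩
        rw [he.neg_one_pow, one_smul]
      · rw [List.count_cons_of_ne (Ne.symm hij)]
        rw [← mul_assoc, c_anticomm S hij, neg_mul, mul_assoc, ih, mul_smul_comm,
          ← mul_assoc, ← neg_smul]
        congr 1
        rw [show T.length + 1 + T.count i = (T.length + T.count i) + 1 by ring, pow_succ,
          mul_neg_one]

lemma C_comm (L1 L2 : List S.Λ) (h : ∀ i ∈ L1, i ∉ L2) :
    S.C L1 * S.C L2 = ((-1:ℂ)^(L1.length * L2.length)) • (S.C L2 * S.C L1) := by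
  induction L1 with
  | nil => simp [C_nil]
  | cons i T ih =>
      have hi : i ∉ L2 := h i List.mem_cons_self
      have hcnt : L2.count i = 0 := List.count_eq_zero_of_not_mem hi
      rw [C_cons, List.length_cons, mul_assoc, ih (fun x hx => h x (List.mem_cons_of_mem _ hx)),
        mul_smul_comm, ← mul_assoc, c_swap, hcnt, smul_mul_assoc, smul_smul, ← pow_add,
        mul_assoc]
      congr 2
      ring

end RefInv
namespace RefInv
variable (S : MajoranaSetting)

lemma C_mem_plus {J : List S.Λ} (h : ∀ i ∈ J, i ∈ S.Λp) :
    S.C J ∈ Algebra.adjoin ℂ (S.c '' {i | i ∈ S.Λp}) := by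
  induction J with
  | nil => rw [C_nil]; exact one_mem _
  | cons i T ih =>
      rw [C_cons]
      exact mul_mem (Algebra.subset_adjoin ⟨i, h i List.mem_cons_self, rfl⟩)
        (ih (fun x hx => h x (List.mem_cons_of_mem _ hx)))

lemma C_mem_minus {J : List S.Λ} (h : ∀ i ∈ J, i ∉ S.Λp) :
    S.C J ∈ Algebra.adjoin ℂ (S.c '' {i | i ∉ S.Λp}) := by
  induction J with
  | nil => rw [C_nil]; exact one_mem _
  | cons i T ih =>
      rw [C_cons]
      exact mul_mem (Algebra.subset_adjoin ⟨i, h i List.mem_cons_self, rfl⟩)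
        (ih (fun x hx => h x (List.mem_cons_of_mem _ hx)))

lemma nil_mem : [] ∈ S.P := by
  obtain ⟨J, ⟨hJP, hJ⟩, -⟩ := S.P_unique ∅ (Finset.empty_subset _)
  have : J = [] := by
    rw [← List.toFinset_eq_empty_iff]; exact hJ
  rwa [← this]

/-- abbreviation for basis elements -/
def EE (J J' : List S.Λ) : S.carrier := S.twist (S.Θ (S.C J)) (S.C J')

lemma twist_formula (J J' : List S.Λ) (hJ : ∀ i ∈ J, i ∈ S.Λp) (hJ' : ∀ i ∈ J', i ∈ S.Λp) :
    EE S J J' = (S.ζ ^ (J.length % 2 * (J'.length % 2))) • (S.Θ (S.C J) * S.C J') := by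
  have hAm : S.Θ (S.C J) ∈ Algebra.adjoin ℂ (S.c '' {i | i ∉ S.Λp}) := by
    rw [Θ_C]
    refine C_mem_minus S ?_
    intro x hx
    obtain ⟨i, hi, rfl⟩ := List.mem_map.mp hx
    exact (S.ϑ_exch i).mp (hJ i hi)
  have hBp : S.C J' ∈ Algebra.adjoin ℂ (S.c '' {i | i ∈ S.Λp}) := C_mem_plus S hJ'
  have hgA : S.gauge (S.Θ (S.C J)) = ((-1:ℂ) ^ (J.length % 2)) • S.Θ (S.C J) := by
    rw [Θ_C, gauge_C, List.length_map, np]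
  have hgB : S.gauge (S.C J') = ((-1:ℂ) ^ (J'.length % 2)) • S.C J' := by
    rw [gauge_C, np]
  have h := S.twist_spec (S.Θ (S.C J)) 1 1 (S.C J') (J.length % 2) 0 0 (J'.length % 2)
    (Nat.le_of_lt_succ (Nat.mod_lt _ (by norm_num))) (by norm_num) (by norm_num)
    (Nat.le_of_lt_succ (Nat.mod_lt _ (by norm_num)))
    hAm (one_mem _) (one_mem _) hBp
    (by rw [hgA]) (by rw [map_one]; norm_num) (by rw [map_one]; norm_num) (by rw [hgB])
  rw [mul_one, one_mul] at h
  rw [show ((J.length % 2 : ℕ) : ℤ) * ((J'.length % 2 : ℕ) : ℤ) - ((0:ℕ):ℤ) * ((0:ℕ):ℤ)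
      = ((J.length % 2 * (J'.length % 2) : ℕ) : ℤ) by push_cast; ring, zpow_natCast] at h
  rw [EE]
  exact h

end RefInv
namespace RefInv
variable (S : MajoranaSetting)

lemma conj_ζ : (starRingEnd ℂ) S.ζ = -S.ζ := by
  have h2 : S.ζ * S.ζ = Complex.I * Complex.I := by
    rw [← sq, ← sq, S.ζ_sq, Complex.I_sq]
  rcases mul_self_eq_mul_self_iff.mp h2 with h | h
  · rw [h, Complex.conj_I]
  · rw [h]; simp [Complex.conj_I]

lemma map_disj {J J' : List S.Λ} (hJ : ∀ i ∈ J, i ∈ S.Λp) (hJ' : ∀ i ∈ J', i ∈ S.Λp) :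
    ∀ i ∈ J, i ∉ J'.map S.ϑ := by
  intro i hi hmem
  obtain ⟨j, hj, hji⟩ := List.mem_map.mp hmem
  have h1 : S.ϑ j ∉ S.Λp := (S.ϑ_exch j).mp (hJ' j hj)
  rw [hji] at h1
  exact h1 (hJ i hi)

lemma Θ_EE {J J' : List S.Λ} (hJ : ∀ i ∈ J, i ∈ S.Λp) (hJ' : ∀ i ∈ J', i ∈ S.Λp) :
    S.Θ (EE S J J') = EE S J' J := by
  rw [twist_formula S J J' hJ hJ', twist_formula S J' J hJ' hJ, S.Θ_smul, S.Θ_mul, S.Θ_invol,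
    map_pow, conj_ζ, Θ_C S J', C_comm S J (J'.map S.ϑ) (map_disj S hJ hJ'), List.length_map,
    smul_smul]
  congr 1
  rw [neg_pow, np (J.length * J'.length), Nat.mul_mod, ← np,
    mul_comm ((-1:ℂ)^(J.length % 2 * (J'.length % 2))) (S.ζ^(J.length % 2 * (J'.length % 2))),
    mul_assoc, ← mul_pow]
  norm_num
  rw [Nat.mul_comm]

lemma EE_nil_left {J' : List S.Λ} (hJ' : ∀ i ∈ J', i ∈ S.Λp) : EE S [] J' = S.C J' := by
  rw [twist_formula S [] J' (by simp) hJ', C_nil, Θ_one]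
  simp

lemma Tr_EE {J J' : List S.Λ} (hJ : J ∈ S.P) (hJ' : J' ∈ S.P) :
    S.Tr (EE S J J') = if J = [] ∧ J' = [] then 1 else 0 :=
  S.Tr_basis J hJ J' hJ'

lemma Tr_C {M : List S.Λ} (hM : M ∈ S.P) : S.Tr (S.C M) = if M = [] then 1 else 0 := by
  have h := Tr_EE S (nil_mem S) hM
  rw [EE_nil_left S (S.P_sub M hM)] at h
  simpa using h

lemma Tr_one : S.Tr 1 = 1 := by
  have := Tr_C S (nil_mem S)
  rw [C_nil] at this
  simpa using this

def ΘHom : S.carrier →+ S.carrier := AddMonoidHom.mk' S.Θ S.Θ_add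

lemma Θ_sum {α : Type*} (s : Finset α) (f : α → S.carrier) :
    S.Θ (∑ x ∈ s, f x) = ∑ x ∈ s, S.Θ (f x) := map_sum (ΘHom S) f s

lemma Tr_Θ (x : S.carrier) : S.Tr (S.Θ x) = (starRingEnd ℂ) (S.Tr x) := by
  have hx := S.basis_span x
  induction hx using Submodule.span_induction with
  | mem y hy =>
      obtain ⟨⟨⟨J, hJ⟩, ⟨J', hJ'⟩⟩, rfl⟩ := hy
      show S.Tr (S.Θ (EE S J J')) = (starRingEnd ℂ) (S.Tr (EE S J J'))
      rw [Θ_EE S (S.P_sub J hJ) (S.P_sub J' hJ'), Tr_EE S hJ' hJ, Tr_EE S hJ hJ']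
      simp [apply_ite (starRingEnd ℂ), and_comm]
  | zero => simp [Θ_zero]
  | add a b ha hb iha ihb => rw [S.Θ_add, map_add, map_add, iha, ihb, map_add]
  | smul z a ha iha => rw [S.Θ_smul, map_smul, map_smul, iha, smul_eq_mul, smul_eq_mul, map_mul]

end RefInv
namespace RefInv
variable (S : MajoranaSetting)

lemma c_swap' (i : S.Λ) (M : List S.Λ) :
    S.C M * S.c i = ((-1:ℂ)^(M.length + M.count i)) • (S.c i * S.C M) := by
  rw [c_swap S i M, smul_smul, ← pow_add]
  have he : Even ((M.length + M.count i) + (M.length + M.count i)) := ⟨_, rfl⟩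
  rw [he.neg_one_pow, one_smul]

def phi (i : S.Λ) (x : S.carrier) : S.carrier := S.c i * S.gauge x * S.c i

lemma phi_mul (i : S.Λ) (x y : S.carrier) :
    phi S i (x * y) = phi S i x * phi S i y := by
  unfold phi
  rw [map_mul]
  have : S.gauge x * S.gauge y = S.gauge x * (S.c i * S.c i) * S.gauge y := by
    rw [c_sq, mul_one]
  rw [mul_assoc (S.c i), this]
  noncomm_ring

lemma phi_C (i : S.Λ) (M : List S.Λ) :
    phi S i (S.C M) = ((-1:ℂ)^(M.count i)) • S.C M := by
  unfold phi
  rw [gauge_C, mul_smul_comm, smul_mul_assoc, mul_assoc, c_swap' S i M, mul_smul_comm,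
    ← mul_assoc, c_sq, one_mul, smul_smul, ← pow_add]
  congr 1
  rw [show M.length + (M.length + M.count i) = 2 * M.length + M.count i by ring, pow_add,
    pow_mul, neg_one_sq, one_pow, one_mul]

lemma Tr_phi (i : S.Λ) (x : S.carrier)
    (hx : x ∈ Submodule.span ℂ (Set.range fun J : {J // J ∈ S.P} => S.C J.1)) :
    S.Tr (phi S i x) = S.Tr x := by
  induction hx using Submodule.span_induction with
  | mem y hy =>
      obtain ⟨⟨M, hM⟩, rfl⟩ := hy
      show S.Tr (phi S i (S.C M)) = S.Tr (S.C M)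
      rw [phi_C, map_smul, Tr_C S hM, smul_eq_mul]
      by_cases hM0 : M = []
      · subst hM0; simp
      · simp [hM0]
  | zero => simp [phi, map_zero]
  | add a b ha hb iha ihb =>
      have hadd : phi S i (a + b) = phi S i a + phi S i b := by
        unfold phi; rw [map_add]; noncomm_ring
      rw [hadd, map_add, iha, ihb, map_add]
  | smul z a ha iha =>
      have hsmul : phi S i (z • a) = z • phi S i a := by
        unfold phi; rw [map_smul, mul_smul_comm, smul_mul_assoc]
      rw [hsmul, map_smul, map_smul, iha]

lemma plus_span' {x : S.carrier} (hx : x ∈ S.Aplus) :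
    x ∈ Submodule.span ℂ (Set.range fun J : {J // J ∈ S.P} => S.C J.1) :=
  S.plus_span x hx

lemma CC_mem {K J : List S.Λ} (hK : K ∈ S.P) (hJ : J ∈ S.P) :
    S.C K * S.C J ∈ Submodule.span ℂ (Set.range fun J : {J // J ∈ S.P} => S.C J.1) :=
  plus_span' S (mul_mem (C_mem_plus S (S.P_sub K hK)) (C_mem_plus S (S.P_sub J hJ)))

lemma Tr_CC_zero {K J : List S.Λ} (hK : K ∈ S.P) (hJ : J ∈ S.P) (hne : K ≠ J) :
    S.Tr (S.C K * S.C J) = 0 := by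
  have hfin : K.toFinset ≠ J.toFinset := by
    intro he
    obtain ⟨L, -, huniq⟩ := S.P_unique K.toFinset (by
      intro x hx; exact S.P_sub K hK x (List.mem_toFinset.mp hx))
    exact hne ((huniq K ⟨hK, rfl⟩).trans (huniq J ⟨hJ, he.symm⟩).symm)
  have hex : ∃ a, ¬(a ∈ K.toFinset ↔ a ∈ J.toFinset) := by
    by_contra hc
    push_neg at hc
    exact hfin (Finset.ext fun a => (hc a))
  obtain ⟨a, ha⟩ := hex
  simp only [List.mem_toFinset] at ha
  have hcount : K.count a + J.count a = 1 := by
    by_cases haK : a ∈ K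
    · have haJ : a ∉ J := fun h => ha ⟨fun _ => h, fun _ => haK⟩
      rw [List.count_eq_zero_of_not_mem haJ,
        List.count_eq_one_of_mem (S.P_nodup K hK) haK]
    · have haJ : a ∈ J := by
        by_contra haJ
        exact ha ⟨fun h => absurd h haK, fun h => absurd h haJ⟩
      rw [List.count_eq_zero_of_not_mem haK,
        List.count_eq_one_of_mem (S.P_nodup J hJ) haJ]
  have hphi : phi S a (S.C K * S.C J) = (-1 : ℂ) • (S.C K * S.C J) := by
    rw [phi_mul, phi_C, phi_C, smul_mul_assoc, mul_smul_comm, smul_smul, ← pow_add, hcount,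
      pow_one]
  have h := Tr_phi S a _ (CC_mem S hK hJ)
  rw [hphi, map_smul, smul_eq_mul, neg_one_mul] at h
  linear_combination -h / 2

end RefInv
namespace RefInv
variable (S : MajoranaSetting)

lemma C_mul_self {M : List S.Λ} (hnd : M.Nodup) :
    ∃ ε : ℂ, (ε = 1 ∨ ε = -1) ∧ S.C M * S.C M = ε • 1 := by
  induction M with
  | nil => exact ⟨1, Or.inl rfl, by simp [C_nil]⟩
  | cons i T ih =>
      obtain ⟨hiT, hTnd⟩ := List.nodup_cons.mp hnd
      obtain ⟨ε, hε, hT⟩ := ih hTnd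
      refine ⟨(-1)^T.length * ε, ?_, ?_⟩
      · rcases neg_one_pow_eq_or ℂ T.length with h | h <;> rcases hε with h' | h' <;>
          rw [h, h'] <;> norm_num
      · rw [C_cons, mul_assoc, ← mul_assoc (S.C T) (S.c i), c_swap' S i T,
          List.count_eq_zero_of_not_mem hiT, add_zero, smul_mul_assoc, mul_smul_comm,
          mul_assoc, ← mul_assoc (S.c i) (S.c i), c_sq, one_mul, hT, smul_smul]

lemma Tr_CC_self {K : List S.Λ} (hK : K ∈ S.P) :
    S.Tr (S.C K * S.C K) = 1 ∨ S.Tr (S.C K * S.C K) = -1 := by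
  obtain ⟨ε, hε, h⟩ := C_mul_self S (S.P_nodup K hK)
  rw [h, map_smul, Tr_one, smul_eq_mul, mul_one]
  exact hε

lemma ζ_ne : S.ζ ≠ 0 := by
  intro h
  have := S.ζ_sq
  rw [h] at this
  norm_num at this

lemma Tr_ΘXY (x : S.carrier)
    (hx : x ∈ Submodule.span ℂ (Set.range fun J : {J // J ∈ S.P} => S.C J.1))
    (y : S.carrier)
    (hy : y ∈ Submodule.span ℂ (Set.range fun J : {J // J ∈ S.P} => S.C J.1)) :
    S.Tr (S.Θ x * y) = (starRingEnd ℂ) (S.Tr x) * S.Tr y := by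
  induction hx using Submodule.span_induction with
  | mem x' hx' =>
      obtain ⟨⟨M, hM⟩, rfl⟩ := hx'
      induction hy using Submodule.span_induction with
      | mem y' hy' =>
          obtain ⟨⟨M', hM'⟩, rfl⟩ := hy'
          show S.Tr (S.Θ (S.C M) * S.C M') = (starRingEnd ℂ) (S.Tr (S.C M)) * S.Tr (S.C M')
          have h := congrArg S.Tr (twist_formula S M M' (S.P_sub M hM) (S.P_sub M' hM'))
          rw [map_smul, smul_eq_mul] at h
          have hEE : S.Tr (EE S M M') = if M = [] ∧ M' = [] then 1 else 0 := Tr_EE S hM hM'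
          rw [hEE] at h
          by_cases hMM : M = [] ∧ M' = []
          · obtain ⟨h1, h2⟩ := hMM
            subst h1; subst h2
            rw [if_pos ⟨rfl, rfl⟩] at h
            simp only [List.length_nil] at h
            rw [pow_zero, one_mul] at h
            rw [← h, C_nil, Tr_one]
            simp
          · rw [if_neg hMM] at h
            have hz : S.Tr (S.Θ (S.C M) * S.C M') = 0 :=
              by
                have := (mul_eq_zero.mp h.symm)
                rcases this with h' | h'
                · exact absurd h' (pow_ne_zero _ (ζ_ne S))
                · exact h'
            rw [hz, Tr_C S hM, Tr_C S hM']
            rcases not_and_or.mp hMM with hM0 | hM0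
            · rw [if_neg hM0]; simp
            · rw [if_neg hM0]; simp
      | zero => simp
      | add a b ha hb iha ihb => rw [mul_add, map_add, iha, ihb, map_add, mul_add]
      | smul z a ha iha =>
          rw [mul_smul_comm, map_smul, map_smul, iha, smul_eq_mul, smul_eq_mul]
          ring
  | zero => simp [Θ_zero]
  | add a b ha hb iha ihb => rw [S.Θ_add, add_mul, map_add, iha, ihb, map_add, map_add,
      add_mul]
  | smul z a ha iha =>
      rw [S.Θ_smul, smul_mul_assoc, map_smul, map_smul, iha, smul_eq_mul, smul_eq_mul,
        map_mul]
      ring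

end RefInv
namespace RefInv
variable (S : MajoranaSetting)

lemma EE_mul {K K' J J' : List S.Λ} (hK : K ∈ S.P) (hK' : K' ∈ S.P) (hJ : J ∈ S.P)
    (hJ' : J' ∈ S.P) :
    S.Tr (EE S K K' * EE S J J') =
      (S.ζ ^ (K.length % 2 * (K'.length % 2) + J.length % 2 * (J'.length % 2)) *
        (-1:ℂ) ^ (K'.length * J.length)) *
      ((starRingEnd ℂ) (S.Tr (S.C K * S.C J)) * S.Tr (S.C K' * S.C J')) := by
  have hKp := S.P_sub K hK
  have hK'p := S.P_sub K' hK'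
  have hJp := S.P_sub J hJ
  have hJ'p := S.P_sub J' hJ'
  have hc : S.C K' * S.Θ (S.C J) =
      ((-1:ℂ)^(K'.length * J.length)) • (S.Θ (S.C J) * S.C K') := by
    rw [Θ_C, C_comm S K' (J.map S.ϑ) (map_disj S hK'p hJp), List.length_map]
  have hX : (S.Θ (S.C K) * S.C K') * (S.Θ (S.C J) * S.C J') =
      ((-1:ℂ)^(K'.length * J.length)) • (S.Θ (S.C K * S.C J) * (S.C K' * S.C J')) := by
    rw [mul_assoc, ← mul_assoc (S.C K') (S.Θ (S.C J)) (S.C J'), hc, smul_mul_assoc,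
      mul_smul_comm, S.Θ_mul]
    congr 1
    noncomm_ring
  rw [twist_formula S K K' hKp hK'p, twist_formula S J J' hJp hJ'p, smul_mul_assoc,
    mul_smul_comm, smul_smul, ← pow_add, hX, map_smul, map_smul,
    Tr_ΘXY S _ (CC_mem S hK hJ) _ (CC_mem S hK' hJ'), smul_eq_mul, smul_eq_mul]
  ring

lemma Tr_EE_mul_zero {K K' J J' : List S.Λ} (hK : K ∈ S.P) (hK' : K' ∈ S.P) (hJ : J ∈ S.P)
    (hJ' : J' ∈ S.P) (hne : K ≠ J ∨ K' ≠ J') :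
    S.Tr (EE S K K' * EE S J J') = 0 := by
  rw [EE_mul S hK hK' hJ hJ']
  rcases hne with h | h
  · rw [Tr_CC_zero S hK hJ h]
    simp
  · rw [Tr_CC_zero S hK' hJ' h]
    simp

lemma Tr_EE_mul_self {K K' : List S.Λ} (hK : K ∈ S.P) (hK' : K' ∈ S.P) :
    S.Tr (EE S K K' * EE S K K') = S.Tr (S.C K * S.C K) * S.Tr (S.C K' * S.C K') := by
  rw [EE_mul S hK hK' hK hK']
  have hconj : (starRingEnd ℂ) (S.Tr (S.C K * S.C K)) = S.Tr (S.C K * S.C K) := by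
    rcases Tr_CC_self S hK with h | h <;> rw [h] <;> norm_num
  rw [hconj]
  have hscal : S.ζ ^ (K.length % 2 * (K'.length % 2) + K.length % 2 * (K'.length % 2)) *
      (-1:ℂ) ^ (K'.length * K.length) = 1 := by
    rw [← two_mul, pow_mul, S.ζ_sq, np (K'.length * K.length), Nat.mul_mod, ← np,
      Nat.mul_comm (K'.length % 2), ← mul_pow]
    norm_num
  rw [hscal, one_mul]

end RefInv
namespace RefInv
variable (S : MajoranaSetting)

lemma tau_ne {K K' : List S.Λ} (hK : K ∈ S.P) (hK' : K' ∈ S.P) :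
    S.Tr (S.C K * S.C K) * S.Tr (S.C K' * S.C K') ≠ 0 := by
  rcases Tr_CC_self S hK with h | h <;> rcases Tr_CC_self S hK' with h' | h' <;>
    rw [h, h'] <;> norm_num

lemma basis_fun_eq :
    (fun p : {J // J ∈ S.P} × {J // J ∈ S.P} =>
      S.twist (S.Θ ((p.1.1.map S.c).prod)) ((p.2.1.map S.c).prod)) =
    (fun p : {J // J ∈ S.P} × {J // J ∈ S.P} => EE S p.1.1 p.2.1) := rfl

lemma tr_nondeg (x : S.carrier) (h : ∀ B, S.Tr (B * x) = 0) : x = 0 := by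
  have hx := S.basis_span x
  rw [basis_fun_eq] at hx
  obtain ⟨g, hg⟩ := (Submodule.mem_span_range_iff_exists_fun ℂ).mp hx
  have hzero : ∀ q : {J // J ∈ S.P} × {J // J ∈ S.P}, g q = 0 := by
    intro q
    have h0 := h (EE S q.1.1 q.2.1)
    rw [← hg, Finset.mul_sum, map_sum] at h0
    rw [Finset.sum_eq_single q] at h0
    · rw [mul_smul_comm, map_smul, smul_eq_mul,
        Tr_EE_mul_self S q.1.2 q.2.2] at h0
      exact (mul_eq_zero.mp h0).resolve_right (tau_ne S q.1.2 q.2.2)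
    · intro p _ hpq
      rw [mul_smul_comm, map_smul, smul_eq_mul, Tr_EE_mul_zero S q.1.2 q.2.2 p.1.2 p.2.2,
        mul_zero]
      by_contra hc
      push_neg at hc
      obtain ⟨h1, h2⟩ := hc
      exact hpq (Prod.ext (Subtype.ext h1.symm) (Subtype.ext h2.symm))
    · intro hq
      exact absurd (Finset.mem_univ q) hq
  rw [← hg]
  simp [hzero]

lemma b_to_a {R : S.carrier} (hΘR : S.Θ R = R) :
    ∀ A, S.Tr (S.Θ A * R) = (starRingEnd ℂ) (S.Tr (A * R)) := by
  intro A
  conv_lhs => rw [← hΘR]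
  rw [← S.Θ_mul, Tr_Θ]

lemma a_to_b {R : S.carrier}
    (ha : ∀ A, S.Tr (S.Θ A * R) = (starRingEnd ℂ) (S.Tr (A * R))) : S.Θ R = R := by
  have key : ∀ B, S.Tr (B * (R - S.Θ R)) = 0 := by
    intro B
    rw [mul_sub, map_sub]
    have h2 := ha (S.Θ B)
    rw [S.Θ_invol] at h2
    have h3 : S.Tr (B * S.Θ R) = S.Tr (S.Θ (S.Θ B * R)) := by rw [S.Θ_mul, S.Θ_invol]
    rw [h3, Tr_Θ, ← h2, sub_self]
  have h0 := tr_nondeg S _ key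
  exact (sub_eq_zero.mp h0).symm

end RefInv
namespace RefInv
variable (S : MajoranaSetting)

lemma ΘR_eq (r : List S.Λ → List S.Λ → ℂ) :
    S.Θ (∑ J ∈ S.P, ∑ J' ∈ S.P, r J J' • EE S J J') =
      ∑ J ∈ S.P, ∑ J' ∈ S.P, (starRingEnd ℂ) (r J' J) • EE S J J' := by
  have h1 : S.Θ (∑ J ∈ S.P, ∑ J' ∈ S.P, r J J' • EE S J J') =
      ∑ J ∈ S.P, ∑ J' ∈ S.P, (starRingEnd ℂ) (r J J') • EE S J' J := by
    rw [Θ_sum]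
    refine Finset.sum_congr rfl fun J hJ => ?_
    rw [Θ_sum]
    refine Finset.sum_congr rfl fun J' hJ' => ?_
    rw [S.Θ_smul, Θ_EE S (S.P_sub _ hJ) (S.P_sub _ hJ')]
  rw [h1]
  exact Finset.sum_comm

lemma b_iff_c (r : List S.Λ → List S.Λ → ℂ) (R : S.carrier)
    (hR : R = ∑ J ∈ S.P, ∑ J' ∈ S.P, r J J' • EE S J J') :
    S.Θ R = R ↔ ∀ J ∈ S.P, ∀ J' ∈ S.P, r J' J = (starRingEnd ℂ) (r J J') := by
  constructor
  · intro hb J hJ J' hJ'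
    have h0 : ∑ J ∈ S.P, ∑ J' ∈ S.P,
        ((starRingEnd ℂ) (r J' J) - r J J') • EE S J J' = 0 := by
      have := hb
      rw [hR, ΘR_eq] at this
      calc ∑ J ∈ S.P, ∑ J' ∈ S.P, ((starRingEnd ℂ) (r J' J) - r J J') • EE S J J'
          = (∑ J ∈ S.P, ∑ J' ∈ S.P, (starRingEnd ℂ) (r J' J) • EE S J J') -
            ∑ J ∈ S.P, ∑ J' ∈ S.P, r J J' • EE S J J' := by
            rw [← Finset.sum_sub_distrib]
            refine Finset.sum_congr rfl fun K hK => ?_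
            rw [← Finset.sum_sub_distrib]
            refine Finset.sum_congr rfl fun K' hK' => ?_
            rw [sub_smul]
        _ = 0 := by rw [this, sub_self]
    have hsum : ∑ p : {J // J ∈ S.P} × {J // J ∈ S.P},
        ((starRingEnd ℂ) (r p.2.1 p.1.1) - r p.1.1 p.2.1) • EE S p.1.1 p.2.1 = 0 := by
      rw [Fintype.sum_prod_type]
      simp only [Finset.univ_eq_attach]
      calc ∑ a ∈ S.P.attach, ∑ b ∈ S.P.attach,
            ((starRingEnd ℂ) (r b.1 a.1) - r a.1 b.1) • EE S a.1 b.1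
          = ∑ J ∈ S.P, ∑ J' ∈ S.P, ((starRingEnd ℂ) (r J' J) - r J J') • EE S J J' := by
            rw [Finset.sum_attach S.P (fun J => ∑ b ∈ S.P.attach,
              ((starRingEnd ℂ) (r b.1 J) - r J b.1) • EE S J b.1)]
            refine Finset.sum_congr rfl fun K _ => ?_
            exact Finset.sum_attach S.P
              (fun J' => ((starRingEnd ℂ) (r J' K) - r K J') • EE S K J')
        _ = 0 := h0
    have hli := Fintype.linearIndependent_iff.mp S.basis_indep
      (fun p => (starRingEnd ℂ) (r p.2.1 p.1.1) - r p.1.1 p.2.1)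
    have := hli hsum ⟨⟨J, hJ⟩, ⟨J', hJ'⟩⟩
    have h5 : (starRingEnd ℂ) (r J' J) = r J J' := by
      have := sub_eq_zero.mp this
      exact this
    calc r J' J = (starRingEnd ℂ) ((starRingEnd ℂ) (r J' J)) := by
          rw [Complex.conj_conj]
      _ = (starRingEnd ℂ) (r J J') := by rw [h5]
  · intro hc
    rw [hR, ΘR_eq]
    refine Finset.sum_congr rfl fun J hJ => Finset.sum_congr rfl fun J' hJ' => ?_
    rw [hc J hJ J' hJ', Complex.conj_conj]

end RefInv
namespace RefInv
variable (S : MajoranaSetting)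

lemma Θ_twist {A B : S.carrier} (hA : A ∈ S.Aplus) (hB : B ∈ S.Aplus) :
    S.Θ (S.twist (S.Θ A) B) = S.twist (S.Θ B) A := by
  have hA' := plus_span' S hA
  have hB' := plus_span' S hB
  clear hA hB
  induction hA' using Submodule.span_induction with
  | mem a ha =>
      obtain ⟨⟨M, hM⟩, rfl⟩ := ha
      induction hB' using Submodule.span_induction with
      | mem b hb =>
          obtain ⟨⟨M', hM'⟩, rfl⟩ := hb
          show S.Θ (EE S M M') = EE S M' M
          exact Θ_EE S (S.P_sub M hM) (S.P_sub M' hM')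
      | zero =>
          show S.Θ (S.twist (S.Θ (S.C M)) 0) = S.twist (S.Θ 0) (S.C M)
          have h1 : S.twist (S.Θ (S.C M)) 0 = 0 := by
            have := S.twist_smul_right 0 (S.Θ (S.C M)) 0
            simpa using this
          rw [h1, Θ_zero]
          have := S.twist_smul_left 0 0 (S.C M)
          simpa using this.symm
      | add a b ha hb iha ihb =>
          rw [S.twist_add_right, S.Θ_add, iha, ihb, S.Θ_add, S.twist_add_left]
      | smul z a ha iha =>
          rw [S.twist_smul_right, S.Θ_smul, iha, S.Θ_smul, S.twist_smul_left]
  | zero =>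
      have h1 : S.twist (S.Θ 0) B = 0 := by
        rw [Θ_zero]
        have := S.twist_smul_left 0 0 B
        simpa using this
      rw [h1, Θ_zero]
      have := S.twist_smul_right 0 (S.Θ B) 0
      simpa using this.symm
  | add a b ha hb iha ihb =>
      rw [S.Θ_add, S.twist_add_left, S.Θ_add, iha, ihb, S.twist_add_right]
  | smul z a ha iha =>
      rw [S.Θ_smul, S.twist_smul_left, S.Θ_smul, iha, Complex.conj_conj,
        S.twist_smul_right]

lemma Tr_EE_R (r : List S.Λ → List S.Λ → ℂ) (R : S.carrier)
    (hR : R = ∑ J ∈ S.P, ∑ J' ∈ S.P, r J J' • EE S J J')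
    {K K' : List S.Λ} (hK : K ∈ S.P) (hK' : K' ∈ S.P) :
    S.Tr (EE S K K' * R) =
      r K K' * (S.Tr (S.C K * S.C K) * S.Tr (S.C K' * S.C K')) := by
  subst hR
  rw [Finset.mul_sum, map_sum, Finset.sum_eq_single K]
  · rw [Finset.mul_sum, map_sum, Finset.sum_eq_single K']
    · rw [mul_smul_comm, map_smul, smul_eq_mul, Tr_EE_mul_self S hK hK']
    · intro J' hJ'mem hne
      rw [mul_smul_comm, map_smul, smul_eq_mul,
        Tr_EE_mul_zero S hK hK' hK hJ'mem (Or.inr (Ne.symm hne)), mul_zero]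
    · intro h; exact absurd hK' h
  · intro J hJmem hne
    rw [Finset.mul_sum, map_sum]
    refine Finset.sum_eq_zero fun J' hJ'mem => ?_
    rw [mul_smul_comm, map_smul, smul_eq_mul,
      Tr_EE_mul_zero S hK hK' hJmem hJ'mem (Or.inl (Ne.symm hne)), mul_zero]
  · intro h; exact absurd hK h

end RefInv
namespace RefInv
variable (S : MajoranaSetting)

lemma b_iff_d (r : List S.Λ → List S.Λ → ℂ) (R : S.carrier)
    (hR : R = ∑ J ∈ S.P, ∑ J' ∈ S.P, r J J' • EE S J J') :
    S.Θ R = R ↔ ∀ A ∈ S.Aplus, ∀ B ∈ S.Aplus,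
      S.Tr (S.twist (S.Θ A) B * R)
        = starRingEnd ℂ (S.Tr (S.twist (S.Θ B) A * R)) := by
  constructor
  · intro hb A hA B hB
    have h := b_to_a S hb (S.twist (S.Θ A) B)
    rw [Θ_twist S hA hB] at h
    rw [h, Complex.conj_conj]
  · intro hd
    apply (b_iff_c S r R hR).mpr
    intro J hJ J' hJ'
    have hA : S.C J' ∈ S.Aplus := C_mem_plus S (S.P_sub J' hJ')
    have hB : S.C J ∈ S.Aplus := C_mem_plus S (S.P_sub J hJ)
    have h : S.Tr (EE S J' J * R) = starRingEnd ℂ (S.Tr (EE S J J' * R)) :=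
      hd (S.C J') hA (S.C J) hB
    rw [Tr_EE_R S r R hR hJ' hJ, Tr_EE_R S r R hR hJ hJ'] at h
    have hreal : (starRingEnd ℂ)
        (S.Tr (S.C J * S.C J) * S.Tr (S.C J' * S.C J')) =
        S.Tr (S.C J * S.C J) * S.Tr (S.C J' * S.C J') := by
      rcases Tr_CC_self S hJ with h1 | h1 <;> rcases Tr_CC_self S hJ' with h2 | h2 <;>
        rw [h1, h2] <;> norm_num
    rw [RingHom.map_mul (starRingEnd ℂ) (r J J')
        (S.Tr (S.C J * S.C J) * S.Tr (S.C J' * S.C J')), hreal,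
      mul_comm (S.Tr (S.C J' * S.C J')) (S.Tr (S.C J * S.C J))] at h
    exact mul_right_cancel₀ (tau_ne S hJ hJ') h

end RefInv

/-- for `ω(A) = Tr(A·R)` with density matrix
`R = ∑ r_{𝔍𝔍'} Θ(C_𝔍)∘C_𝔍'`, the conditions (a) `ω` reflection invariant,
(b) `Θ(R) = R`, (c) the matrix `r` hermitian, (d) the form
`⟨A,B⟩ = ω(Θ(A)∘B)` hermitian on `𝔄₊`, are all equivalent. -/
theorem reflection_invariant_functionals (S : MajoranaSetting)
    (r : List S.Λ → List S.Λ → ℂ) (R : S.carrier)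
    (hR : R = ∑ J ∈ S.P, ∑ J' ∈ S.P, r J J' • S.twist (S.Θ (S.C J)) (S.C J')) :
    ((∀ A : S.carrier, S.Tr (S.Θ A * R) = starRingEnd ℂ (S.Tr (A * R))) ↔
      S.Θ R = R) ∧
    (S.Θ R = R ↔ ∀ J ∈ S.P, ∀ J' ∈ S.P, r J' J = starRingEnd ℂ (r J J')) ∧
    (S.Θ R = R ↔ ∀ A ∈ S.Aplus, ∀ B ∈ S.Aplus,
      S.Tr (S.twist (S.Θ A) B * R)
        = starRingEnd ℂ (S.Tr (S.twist (S.Θ B) A * R))) := by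
  have hR' : R = ∑ J ∈ S.P, ∑ J' ∈ S.P, r J J' • RefInv.EE S J J' := hR
  exact ⟨⟨fun ha => RefInv.a_to_b S ha, fun hb => RefInv.b_to_a S hb⟩,
    RefInv.b_iff_c S r R hR', RefInv.b_iff_d S r R hR'⟩
end
end
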